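/- Let D be the open modular triangle for Γ = PSL₂(ℤ), let γ be a Jordan curve with trace contained in D, let T denote the translation z ↦ z + 1, and set F = (D ∩ ext γ) ∪ T(int γ). Then F is open, no two distinct points of F are Γ-equivalent, and every point of ℍ has a Γ-translate in the closure of F. -/

import Mathlib

open Bornology

/-- The Möbius action of `SL₂(ℤ)` (factoring through `PSL₂(ℤ)`) on points of `ℂ`. -/
noncomputable def mobius (g : Matrix.SpecialLinearGroup (Fin 2) ℤ) (z : ℂ) : ℂ :=
  (((g 0 0 : ℤ) : ℂ) * z + ((g 0 1 : ℤ) : ℂ)) / (((g 1 0 : ℤ) : ℂ) * z + ((g 1 1 : ℤ) : ℂ))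

/-- The open modular triangle. -/
def modularTriangle : Set ℂ :=
  {z : ℂ | 0 < z.im ∧ |z.re| < 1 / 2 ∧ 1 < ‖z‖}

open UpperHalfPlane ModularGroup Filter
open scoped Modular

section Aux

lemma mobius_coe (g : Matrix.SpecialLinearGroup (Fin 2) ℤ) (z : ℍ) :
    mobius g ↑z = ↑(g • z) := by
  rw [UpperHalfPlane.specialLinearGroup_apply]
  simp [mobius]

lemma mem_fdo_iff (z : ℍ) : z ∈ 𝒟ᵒ ↔ (z : ℂ) ∈ modularTriangle := by
  constructor
  · rintro ⟨h1, h2⟩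
    refine ⟨z.im_pos, h2, ?_⟩
    have := Complex.sq_norm (z : ℂ)
    nlinarith [norm_nonneg (z : ℂ)]
  · rintro ⟨h0, h2, h1⟩
    refine ⟨?_, h2⟩
    have := Complex.sq_norm (z : ℂ)
    nlinarith [norm_nonneg (z : ℂ)]

lemma isOpen_mt : IsOpen modularTriangle := by
  have h1 : IsOpen {z : ℂ | 0 < z.im} := isOpen_lt continuous_const Complex.continuous_im
  have h2 : IsOpen {z : ℂ | |z.re| < 1/2} :=
    isOpen_lt (continuous_abs.comp Complex.continuous_re) continuous_const
  have h3 : IsOpen {z : ℂ | 1 < ‖z‖} :=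
    isOpen_lt continuous_const continuous_norm
  have : modularTriangle = {z : ℂ | 0 < z.im} ∩ ({z : ℂ | |z.re| < 1/2} ∩ {z : ℂ | 1 < ‖z‖}) := by
    ext z; simp [modularTriangle]
  rw [this]
  exact h1.inter (h2.inter h3)

lemma compl_connected : IsConnected (modularTriangleᶜ) := by
  have hC : IsConnected (Metric.closedBall (0:ℂ) 1) :=
    (convex_closedBall _ _).isConnected (Metric.nonempty_closedBall.2 zero_le_one)
  have hA : IsConnected {z : ℂ | z.im ≤ 0} :=
    (convex_halfSpace_im_le 0).isConnected ⟨0, by simp⟩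
  have hBp : IsConnected {z : ℂ | 1/2 ≤ z.re} :=
    (convex_halfSpace_re_ge (1/2)).isConnected ⟨1, by norm_num⟩
  have hBm : IsConnected {z : ℂ | z.re ≤ -(1/2)} :=
    (convex_halfSpace_re_le (-(1/2))).isConnected ⟨-1, by norm_num⟩
  have h1 : IsConnected (Metric.closedBall (0:ℂ) 1 ∪ {z : ℂ | z.im ≤ 0}) := by
    refine IsConnected.union ⟨0, by simp⟩ hC hA
  have h2 : IsConnected ((Metric.closedBall (0:ℂ) 1 ∪ {z : ℂ | z.im ≤ 0}) ∪ {z : ℂ | 1/2 ≤ z.re}) := by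
    refine IsConnected.union ⟨(1/2 : ℂ), ?_⟩ h1 hBp
    constructor
    · left; simp [Complex.norm_real]; norm_num
    · simp
  have h3 : IsConnected (((Metric.closedBall (0:ℂ) 1 ∪ {z : ℂ | z.im ≤ 0}) ∪ {z : ℂ | 1/2 ≤ z.re}) ∪ {z : ℂ | z.re ≤ -(1/2)}) := by
    refine IsConnected.union ⟨(-(1/2) : ℂ), ?_⟩ h2 hBm
    constructor
    · left; left; simp [Complex.norm_real]; norm_num
    · simp
  convert h3 using 1
  ext z
  simp only [Set.mem_compl_iff, modularTriangle, Set.mem_setOf_eq, Set.mem_union,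
    Metric.mem_closedBall, Complex.dist_eq, sub_zero]
  constructor
  · intro h
    by_cases h0 : z.im ≤ 0
    · exact Or.inl (Or.inl (Or.inr h0))
    push_neg at h0
    by_cases h1 : ‖z‖ ≤ 1
    · exact Or.inl (Or.inl (Or.inl h1))
    push_neg at h1
    have : ¬ |z.re| < 1/2 := fun hh => h ⟨h0, hh, h1⟩
    rcases le_or_gt (1/2) z.re with hr | hr
    · exact Or.inl (Or.inr hr)
    · right
      rcases le_or_gt z.re (-(1/2)) with hr2 | hr2
      · exact hr2
      · exfalso; exact this (abs_lt.2 ⟨by linarith, hr⟩)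
  · rintro ((( h | h) | h) | h) ⟨hi, hr, ha⟩
    · linarith
    · linarith
    · rw [abs_lt] at hr; linarith
    · rw [abs_lt] at hr; linarith

lemma compl_unbounded : ¬ IsBounded (modularTriangleᶜ) := by
  intro h
  obtain ⟨r, hr⟩ := isBounded_iff_forall_norm_le.mp h
  have hmem : ((|r| + 1 : ℝ) : ℂ) ∈ modularTriangleᶜ := by
    intro hc
    have : ((|r| + 1 : ℝ) : ℂ).im = 0 := by simp
    exact absurd hc.1 (by rw [this]; exact lt_irrefl 0)
  have := hr _ hmem
  rw [Complex.norm_real, Real.norm_eq_abs] at this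
  have h1 : (0:ℝ) ≤ |r| := abs_nonneg r
  have h2 : |(|r| + 1)| = |r| + 1 := abs_of_pos (by linarith)
  rw [h2] at this
  linarith [le_abs_self r]

lemma mem_closure_mt {z : ℂ} (h0 : 0 < z.im) (h1 : 1 ≤ Complex.normSq z)
    (h2 : |z.re| ≤ 1/2) : z ∈ closure modularTriangle := by
  set x := z.re
  set y := z.im
  have hx2 : x^2 ≤ 1/4 := by
    rcases abs_le.mp h2 with ⟨ha, hb⟩; nlinarith
  have hxy : 1 ≤ x^2 + y^2 := by
    have := Complex.normSq_apply z; nlinarith [h1]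
  have hy : 1/2 < y := by nlinarith
  set w : ℝ → ℂ := fun t => (↑(x*(1-t)) : ℂ) + (↑(y+t)) * Complex.I with hwdef
  have hre : ∀ t, (w t).re = x*(1-t) := by intro t; simp [hwdef]
  have him : ∀ t, (w t).im = y+t := by intro t; simp [hwdef]
  have hmem : ∀ t : ℝ, 0 < t → t < 1 → w t ∈ modularTriangle := by
    intro t ht ht1
    refine ⟨by rw [him]; linarith, ?_, ?_⟩
    · rw [hre, abs_mul, abs_of_pos (by linarith : (0:ℝ) < 1 - t)]
      calc |x| * (1-t) ≤ (1/2) * (1-t) := by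
            apply mul_le_mul_of_nonneg_right h2 (by linarith)
        _ < 1/2 := by nlinarith
    · have hns : 1 < Complex.normSq (w t) := by
        rw [Complex.normSq_apply, hre, him]
        nlinarith [sq_nonneg (1-t), sq_nonneg t]
      have := Complex.sq_norm (w t)
      nlinarith [norm_nonneg (w t)]
  have hseq : ∀ n : ℕ, w (1/((n:ℝ)+2)) ∈ modularTriangle := by
    intro n
    have hn : (0:ℝ) ≤ (n:ℝ) := n.cast_nonneg
    refine hmem _ (by positivity) ?_
    rw [div_lt_one (by positivity)]
    linarith
  rw [mem_closure_iff_seq_limit]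
  refine ⟨fun n => w (1/((n:ℝ)+2)), hseq, ?_⟩
  · have h2' : Tendsto (fun n : ℕ => ((n:ℝ)+2)) atTop atTop :=
      tendsto_atTop_add_const_right _ 2 tendsto_natCast_atTop_atTop
    have ht : Tendsto (fun n : ℕ => 1/((n:ℝ)+2)) atTop (nhds 0) := by
      simpa [one_div, Function.comp_def] using tendsto_inv_atTop_zero.comp h2'
    have hw : Continuous w := by fun_prop
    have := (hw.tendsto 0).comp ht
    convert this using 2
    simp [hwdef, Complex.ext_iff, x, y]
    apply Complex.ext <;> simp [hwdef, x, y]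

lemma coe_T_smul (z : ℍ) : ((T • z : ℍ) : ℂ) = ↑z + 1 := by
  rw [modular_T_smul, coe_vadd]
  push_cast
  ring

end Aux

theorem example2_fundamental_domain_conditions
    (γ : Circle → ℂ) (hcont : Continuous γ) (hinj : Function.Injective γ)
    (K I E : Set ℂ) (hK : K = Set.range γ) (hKD : K ⊆ modularTriangle)
    (hIo : IsOpen I) (hEo : IsOpen E) (hIc : IsConnected I) (hEc : IsConnected E)
    (hIb : IsBounded I) (hEb : ¬ IsBounded E) (hdisj : Disjoint I E) (hIE : I ∪ E = Kᶜ)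
    (hfI : frontier I = K) (hfE : frontier E = K)
    (F : Set ℂ) (hF : F = (modularTriangle ∩ E) ∪ (fun z => z + 1) '' I) :
    IsOpen F ∧
    (∀ z ∈ F, ∀ w ∈ F, (∃ g : Matrix.SpecialLinearGroup (Fin 2) ℤ, mobius g z = w) → z = w) ∧
    (∀ z : ℂ, 0 < z.im → ∃ g : Matrix.SpecialLinearGroup (Fin 2) ℤ, mobius g z ∈ closure F) := by
  -- the complement of the triangle lies in the exterior
  have hcomplE : modularTriangleᶜ ⊆ E := by
    have hsub : modularTriangleᶜ ⊆ I ∪ E := by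
      intro x hx
      rw [hIE]
      intro hxK
      exact hx (hKD hxK)
    rcases IsPreconnected.subset_or_subset hIo hEo hdisj hsub
        compl_connected.isPreconnected with h | h
    · exact absurd (hIb.subset h) compl_unbounded
    · exact h
  have hID : I ⊆ modularTriangle := by
    intro x hx
    by_contra hc
    exact Set.disjoint_left.mp hdisj hx (hcomplE hc)
  have hclI : closure I = I ∪ K := by
    rw [← hfI, closure_eq_self_union_frontier]
  have hKcl : K ⊆ closure (modularTriangle ∩ E) := by
    intro x hx
    have hxD := hKD hx
    have hxE : x ∈ closure E := frontier_subset_closure (by rw [hfE]; exact hx)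
    rw [mem_closure_iff]
    intro o ho hxo
    obtain ⟨y, ⟨hyo, hyD⟩, hyE⟩ :=
      (mem_closure_iff.mp hxE) (o ∩ modularTriangle) (ho.inter isOpen_mt) ⟨hxo, hxD⟩
    exact ⟨y, hyo, hyD, hyE⟩
  have himg : (fun z : ℂ => z + 1) '' I = (fun z : ℂ => z - 1) ⁻¹' I := by
    ext w
    constructor
    · rintro ⟨x, hx, rfl⟩; simpa using hx
    · intro h; exact ⟨w - 1, h, by ring⟩
  have hFopen : IsOpen F := by
    rw [hF, himg]
    exact (isOpen_mt.inter hEo).union (hIo.preimage (continuous_id.sub continuous_const))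
  refine ⟨hFopen, ?_, ?_⟩
  · rintro z hz w hw ⟨g, hg⟩
    rw [hF] at hz hw
    rcases hz with ⟨hzD, hzE⟩ | ⟨xz, hxz, rfl⟩ <;>
      rcases hw with ⟨hwD, hwE⟩ | ⟨xw, hxw, rfl⟩
    · -- both in D ∩ E
      have h1 : UpperHalfPlane.mk z hzD.1 ∈ 𝒟ᵒ := (mem_fdo_iff _).2 (by simpa using hzD)
      have hw' : (g • UpperHalfPlane.mk z hzD.1 : ℍ) = UpperHalfPlane.mk w hwD.1 := by
        apply UpperHalfPlane.ext
        rw [← mobius_coe]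
        simpa using hg
      have h2 : (g • UpperHalfPlane.mk z hzD.1 : ℍ) ∈ 𝒟ᵒ := by
        rw [hw']
        exact (mem_fdo_iff _).2 (by simpa using hwD)
      have := eq_smul_self_of_mem_fdo_mem_fdo h1 h2
      rw [hw'] at this
      simpa using congrArg (UpperHalfPlane.coe) this
    · -- z in D ∩ E, w = xw + 1
      exfalso
      have h1 : UpperHalfPlane.mk z hzD.1 ∈ 𝒟ᵒ := (mem_fdo_iff _).2 (by simpa using hzD)
      set w₀ := UpperHalfPlane.mk xw (hID hxw).1 with hw₀
      have hgz : (g • UpperHalfPlane.mk z hzD.1 : ℍ) = T • w₀ := by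
        apply UpperHalfPlane.ext
        rw [← mobius_coe, coe_T_smul]
        simpa using hg
      have hkey : ((T⁻¹ * g) • UpperHalfPlane.mk z hzD.1 : ℍ) = w₀ := by
        rw [mul_smul, hgz, inv_smul_smul]
      have h2 : ((T⁻¹ * g) • UpperHalfPlane.mk z hzD.1 : ℍ) ∈ 𝒟ᵒ := by
        rw [hkey]
        exact (mem_fdo_iff _).2 (by simpa using hID hxw)
      have := eq_smul_self_of_mem_fdo_mem_fdo h1 h2
      rw [hkey, hw₀] at this
      have hzx : z = xw := by simpa using congrArg (UpperHalfPlane.coe) this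
      exact Set.disjoint_left.mp hdisj (by rw [hzx]; exact hxw) hzE
    · -- z = xz + 1, w in D ∩ E
      exfalso
      set z₀ := UpperHalfPlane.mk xz (hID hxz).1 with hz₀
      have h1 : z₀ ∈ 𝒟ᵒ := (mem_fdo_iff _).2 (by simpa using hID hxz)
      have hgz : ((g * T) • z₀ : ℍ) = UpperHalfPlane.mk w hwD.1 := by
        apply UpperHalfPlane.ext
        rw [mul_smul, ← mobius_coe, coe_T_smul]
        simpa using hg
      have h2 : ((g * T) • z₀ : ℍ) ∈ 𝒟ᵒ := by
        rw [hgz]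
        exact (mem_fdo_iff _).2 (by simpa using hwD)
      have := eq_smul_self_of_mem_fdo_mem_fdo h1 h2
      rw [hgz] at this
      rw [hz₀] at this
      have hzx : xz = w := by simpa using congrArg (UpperHalfPlane.coe) this
      exact Set.disjoint_left.mp hdisj hxz (by rw [hzx]; exact hwE)
    · -- both translates
      set z₀ := UpperHalfPlane.mk xz (hID hxz).1 with hz₀
      set w₀ := UpperHalfPlane.mk xw (hID hxw).1 with hw₀
      have h1 : z₀ ∈ 𝒟ᵒ := (mem_fdo_iff _).2 (by simpa using hID hxz)
      have hgz : ((g * T) • z₀ : ℍ) = T • w₀ := by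
        apply UpperHalfPlane.ext
        rw [mul_smul, ← mobius_coe, coe_T_smul, coe_T_smul]
        simpa using hg
      have hkey : ((T⁻¹ * (g * T)) • z₀ : ℍ) = w₀ := by
        rw [mul_smul, hgz, inv_smul_smul]
      have h2 : ((T⁻¹ * (g * T)) • z₀ : ℍ) ∈ 𝒟ᵒ := by
        rw [hkey]
        exact (mem_fdo_iff _).2 (by simpa using hID hxw)
      have := eq_smul_self_of_mem_fdo_mem_fdo h1 h2
      rw [hkey, hz₀, hw₀] at this
      have hzx : xz = xw := by simpa using congrArg (UpperHalfPlane.coe) this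
      rw [hzx]
  · intro z hz
    obtain ⟨g, hg⟩ := exists_smul_mem_fd (UpperHalfPlane.mk z hz)
    set w := g • (UpperHalfPlane.mk z hz) with hwdef
    have hwcl : (w : ℂ) ∈ closure modularTriangle := by
      refine mem_closure_mt w.im_pos hg.1 ?_
      simpa using hg.2
    have hsplit : closure modularTriangle ⊆ closure (modularTriangle ∩ E) ∪ I := by
      have hDsub : modularTriangle ⊆ closure (modularTriangle ∩ E) ∪ I := by
        intro x hx
        by_cases hxI : x ∈ I
        · exact Or.inr hxI
        by_cases hxK : x ∈ K
        · exact Or.inl (hKcl hxK)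
        have hxE : x ∈ E := by
          have : x ∈ I ∪ E := by rw [hIE]; exact hxK
          rcases this with h | h
          · exact absurd h hxI
          · exact h
        exact Or.inl (subset_closure ⟨hx, hxE⟩)
      calc closure modularTriangle
          ⊆ closure (closure (modularTriangle ∩ E) ∪ I) := closure_mono hDsub
        _ = closure (modularTriangle ∩ E) ∪ closure I := by
            rw [closure_union, closure_closure]
        _ ⊆ closure (modularTriangle ∩ E) ∪ I := by
            rw [hclI]
            rintro x (h | (h | h))
            · exact Or.inl h
            · exact Or.inr h
            · exact Or.inl (hKcl h)
    have hclF : closure (modularTriangle ∩ E) ⊆ closure F :=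
      closure_mono (by rw [hF]; exact Set.subset_union_left)
    rcases hsplit hwcl with h | h
    · refine ⟨g, ?_⟩
      have : mobius g z = (w : ℂ) := by
        rw [show z = ((UpperHalfPlane.mk z hz : ℍ) : ℂ) from rfl, mobius_coe]
      rw [this]
      exact hclF h
    · refine ⟨T * g, ?_⟩
      have : mobius (T * g) z = ((T • w : ℍ) : ℂ) := by
        rw [show z = ((UpperHalfPlane.mk z hz : ℍ) : ℂ) from rfl, mobius_coe, mul_smul]
      rw [this, coe_T_smul]
      refine subset_closure ?_
      rw [hF]
      exact Or.inr ⟨↑w, h, rfl⟩
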